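/- Let F be a unit-norm frame of ℝ² with consecutive angles α₁,…,α_{k−1} and cross angle A = ∑_{i=1}^{k−1} α_i < π. Then A is a minimal cross angle of F (i.e., A ≤ A' for every cross angle A' of any equivalent configuration) if and only if A + max_i α_i ≤ π. -/

import Mathlib

open Real

/-- Two frames are equivalent when one is obtained from the other by a
composition of a common orthogonal transformation of `ℝ²`, a permutation of the
indices, and sign changes of individual vectors. -/
def FrameEquiv {k : ℕ} (f g : Fin k → EuclideanSpace ℝ (Fin 2)) : Prop :=
  ∃ (U : EuclideanSpace ℝ (Fin 2) ≃ₗᵢ[ℝ] EuclideanSpace ℝ (Fin 2))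
    (σ : Equiv.Perm (Fin k)) (ε : Fin k → ℝ),
      (∀ i, ε i = 1 ∨ ε i = -1) ∧ ∀ i, g i = ε i • U (f (σ i))

/-- The unit vector in `ℝ²` at angle `t`. -/
noncomputable def vec2 (t : ℝ) : EuclideanSpace ℝ (Fin 2) :=
  (WithLp.equiv 2 (Fin 2 → ℝ)).symm ![Real.cos t, Real.sin t]

/-- `A` is a cross angle of the frame `f` if some equivalent frame `g` can be
listed counterclockwise (strictly increasing angles) with total opening
`A < π`. -/
def CrossAngles {m : ℕ} (f : Fin (m + 1) → EuclideanSpace ℝ (Fin 2)) :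
    Set ℝ :=
  {A | ∃ (g : Fin (m + 1) → EuclideanSpace ℝ (Fin 2)) (φ : Fin (m + 1) → ℝ),
    FrameEquiv f g ∧ StrictMono φ ∧ (∀ i, g i = vec2 (φ i)) ∧
      A = φ (Fin.last m) - φ 0 ∧ A < π}


lemma vec2_eq (t : ℝ) :
    vec2 t = Complex.orthonormalBasisOneI.repr (Complex.exp (t * Complex.I)) := by
  apply WithLp.ofLp_injective
  rw [Complex.orthonormalBasisOneI_repr_apply]
  funext i
  fin_cases i <;>
    simp [vec2, Complex.exp_ofReal_mul_I_re, Complex.exp_ofReal_mul_I_im]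

lemma vec2_inj {a b : ℝ} (h : vec2 a = vec2 b) : ∃ n : ℤ, a = b + n * (2 * π) := by
  rw [vec2_eq, vec2_eq] at h
  have h2 := Complex.orthonormalBasisOneI.repr.injective h
  rw [Complex.exp_eq_exp_iff_exists_int] at h2
  obtain ⟨n, hn⟩ := h2
  refine ⟨n, ?_⟩
  have := congrArg Complex.im hn
  simpa [mul_comm, mul_assoc] using this

lemma vec2_add_pi (t : ℝ) : vec2 (t + π) = -vec2 t := by
  rw [vec2_eq, vec2_eq, ← map_neg]
  congr 1
  rw [show ((t + π : ℝ) : ℂ) * Complex.I = ↑t * Complex.I + ↑π * Complex.I by push_cast; ring,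
    Complex.exp_add, Complex.exp_pi_mul_I, mul_neg_one]

lemma isometry_vec2 (U : EuclideanSpace ℝ (Fin 2) ≃ₗᵢ[ℝ] EuclideanSpace ℝ (Fin 2)) :
    ∃ β : ℝ, (∀ t, U (vec2 t) = vec2 (t + β)) ∨ (∀ t, U (vec2 t) = vec2 (β - t)) := by
  set R := Complex.orthonormalBasisOneI.repr with hR
  obtain ⟨a, ha⟩ := linear_isometry_complex (R.trans (U.trans R.symm))
  have key : ∀ z : ℂ, U (R z) = R ((R.trans (U.trans R.symm)) z) := by
    intro z; simp
  obtain ⟨β, hexp⟩ : ∃ β : ℝ, (a : ℂ) = Complex.exp (β * Complex.I) :=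
    ⟨Complex.arg a, by conv_lhs => rw [← Circle.exp_arg a, Circle.coe_exp]⟩
  refine ⟨β, ?_⟩
  rcases ha with ha | ha
  · left
    intro t
    rw [vec2_eq, key, ha, rotation_apply, vec2_eq]
    congr 1
    rw [hexp, ← Complex.exp_add]
    congr 1
    push_cast
    ring
  · right
    intro t
    rw [vec2_eq, key, ha, LinearIsometryEquiv.trans_apply, Complex.conjLIE_apply,
      ← Complex.exp_conj, rotation_apply, hexp, ← Complex.exp_add, vec2_eq]
    congr 1
    rw [map_mul, Complex.conj_ofReal, Complex.conj_I]
    push_cast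
    ring

lemma signed_eq {s t e : ℝ} (he : e = 1 ∨ e = -1) (h : vec2 s = e • vec2 t) :
    ∃ n : ℤ, s = t + n * π := by
  rcases he with rfl | rfl
  · rw [one_smul] at h
    obtain ⟨n, hn⟩ := vec2_inj h
    exact ⟨2 * n, by rw [hn]; push_cast; ring⟩
  · rw [neg_one_smul ℝ, ← vec2_add_pi] at h
    obtain ⟨n, hn⟩ := vec2_inj h
    exact ⟨2 * n + 1, by rw [hn]; push_cast; ring⟩

lemma eq_of_modpi {a b : ℝ} (ha0 : 0 ≤ a) (haπ : a < π) (hb0 : 0 ≤ b) (hbπ : b < π)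
    (n : ℤ) (h : a = b + n * π) : a = b := by
  have hπ := Real.pi_pos
  have h1 : (-1 : ℝ) < n := by nlinarith
  have h2 : (n : ℝ) < 1 := by nlinarith
  have h1' : (-1 : ℤ) < n := by exact_mod_cast h1
  have h2' : n < 1 := by exact_mod_cast h2
  have hn : n = 0 := by omega
  rw [hn] at h; simpa using h

lemma core (m : ℕ) (x φ : Fin (m + 1) → ℝ) (hx : StrictMono x) (hφ : StrictMono φ)
    (hxw : x (Fin.last m) - x 0 < π) (hφw : φ (Fin.last m) - φ 0 < π)
    (τ : Equiv.Perm (Fin (m + 1))) (β : ℝ)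
    (h : ∀ i, ∃ n : ℤ, φ i = x (τ i) + β + n * π)
    (hgap : ∀ j : Fin m, x (Fin.last m) - x 0 + (x j.succ - x j.castSucc) ≤ π) :
    x (Fin.last m) - x 0 ≤ φ (Fin.last m) - φ 0 := by
  have hπ := Real.pi_pos
  have hφ0 : ∀ i, 0 ≤ φ i - φ 0 := fun i => sub_nonneg.2 (hφ.monotone (Fin.zero_le i))
  have hφπ : ∀ i, φ i - φ 0 < π := fun i =>
    lt_of_le_of_lt (by have := hφ.monotone (Fin.le_last i); linarith) hφw
  have hdiff : ∀ i, ∃ n : ℤ, φ i - φ 0 = x (τ i) - x (τ 0) + n * π := by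
    intro i
    obtain ⟨n, hn⟩ := h i
    obtain ⟨n0, hn0⟩ := h 0
    exact ⟨n - n0, by push_cast; rw [hn, hn0]; ring⟩
  by_cases h0 : τ 0 = 0
  · set i := τ.symm (Fin.last m) with hi
    obtain ⟨n, hn⟩ := hdiff i
    rw [Equiv.apply_symm_apply, h0] at hn
    have hx0 : (0 : ℝ) ≤ x (Fin.last m) - x 0 := sub_nonneg.2 (hx.monotone (Fin.zero_le _))
    have := eq_of_modpi (hφ0 i) (hφπ i) hx0 hxw n hn
    have hle : φ i ≤ φ (Fin.last m) := hφ.monotone (Fin.le_last i)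
    linarith
  · obtain ⟨j, hj⟩ := Fin.eq_succ_of_ne_zero h0
    set i := τ.symm j.castSucc with hi
    obtain ⟨n, hn⟩ := hdiff i
    rw [Equiv.apply_symm_apply, hj] at hn
    have hgaplt : x j.succ - x j.castSucc < π := by
      have h1 : x j.castSucc ≥ x 0 := hx.monotone (Fin.zero_le _)
      have h2 : x j.succ ≤ x (Fin.last m) := hx.monotone (Fin.le_last _)
      linarith
    have hgappos : 0 < x j.succ - x j.castSucc :=
      sub_pos.2 (hx (Fin.castSucc_lt_succ (i := j)))
    have hr0 : 0 ≤ x j.castSucc - x j.succ + π := by linarith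
    have hrπ : x j.castSucc - x j.succ + π < π := by linarith
    have hn' : φ i - φ 0 = (x j.castSucc - x j.succ + π) + ((n - 1 : ℤ) : ℝ) * π := by
      rw [hn]; push_cast; ring
    have heq := eq_of_modpi (hφ0 i) (hφπ i) hr0 hrπ (n - 1) hn'
    have hle : φ i ≤ φ (Fin.last m) := hφ.monotone (Fin.le_last i)
    have := hgap j
    linarith

lemma flip_mem (k : ℕ) (θ : Fin (k + 2) → ℝ) (hmono : StrictMono θ)
    (hA : θ (Fin.last (k + 1)) - θ 0 < π) (j : Fin (k + 1)) :
    π - (θ j.succ - θ j.castSucc) ∈ CrossAngles (fun i => vec2 (θ i)) := by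
  have hπ := Real.pi_pos
  have hval : ∀ i : Fin (k + 2), ((i + j.succ : Fin (k + 2)) : ℕ) =
      if (i : ℕ) + (j : ℕ) + 1 < k + 2 then (i : ℕ) + (j : ℕ) + 1
      else (i : ℕ) + (j : ℕ) + 1 - (k + 2) := by
    intro i
    rw [Fin.val_add]
    show ((i : ℕ) + ((j : ℕ) + 1)) % (k + 2) = _
    split_ifs with hlow
    · rw [show (i : ℕ) + ((j : ℕ) + 1) = (i : ℕ) + (j : ℕ) + 1 by ring, Nat.mod_eq_of_lt hlow]
    · have hi2 : (i : ℕ) < k + 2 := i.isLt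
      have hj2 : (j : ℕ) < k + 1 := j.isLt
      have : (i : ℕ) + ((j : ℕ) + 1) = ((i : ℕ) + (j : ℕ) + 1 - (k + 2)) + (k + 2) := by omega
      rw [this, Nat.add_mod_right, Nat.mod_eq_of_lt (by omega)]
  refine ⟨_, fun i : Fin (k + 2) =>
      if (i : ℕ) + (j : ℕ) + 1 < k + 2 then θ (i + j.succ) else θ (i + j.succ) + π,
      ?_, ?_, fun i => rfl, ?_, ?_⟩
  · refine ⟨LinearIsometryEquiv.refl ℝ _, Equiv.addRight j.succ,
      fun i => if (i : ℕ) + (j : ℕ) + 1 < k + 2 then 1 else -1,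
      fun i => by dsimp only; split_ifs <;> simp, ?_⟩
    intro i
    simp only [Equiv.coe_addRight]
    split_ifs with h1
    · rw [one_smul]; rfl
    · rw [vec2_add_pi, neg_one_smul ℝ]; rfl
  · intro i i' hlt
    have hvlt : (i : ℕ) < (i' : ℕ) := hlt
    dsimp only
    split_ifs with h1 h2 h2
    · apply hmono
      rw [Fin.lt_def, hval i, hval i', if_pos h1, if_pos h2]
      omega
    · have hb1 : θ (i + j.succ) ≤ θ (Fin.last (k + 1)) := hmono.monotone (Fin.le_last _)
      have hb2 : θ 0 ≤ θ (i' + j.succ) := hmono.monotone (Fin.zero_le _)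
      linarith
    · omega
    · have := hmono (show i + j.succ < i' + j.succ by
        rw [Fin.lt_def, hval i, hval i', if_neg h1, if_neg h2]; omega)
      linarith
  · have h0 : ((0 : Fin (k + 2)) : ℕ) + (j : ℕ) + 1 < k + 2 := by
      have := j.isLt; simp only [Fin.val_zero]; omega
    have hlastcond : ¬ ((Fin.last (k + 1) : Fin (k + 2)) : ℕ) + (j : ℕ) + 1 < k + 2 := by
      simp only [Fin.val_last]; omega
    have hlastc : (Fin.last (k + 1)) + j.succ = j.castSucc := by
      apply Fin.ext
      rw [hval, if_neg hlastcond]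
      have := j.isLt
      simp only [Fin.val_last, Fin.coe_castSucc]
      omega
    have h0c : (0 : Fin (k + 2)) + j.succ = j.succ := zero_add _
    dsimp only
    rw [if_neg hlastcond, if_pos h0, hlastc, h0c]
    ring
  · have : θ j.castSucc < θ j.succ := hmono (Fin.castSucc_lt_succ (i := j))
    linarith

/-- A cross angle `A = ∑ αᵢ < π` of a counterclockwise-listed frame of `ℝ²` is
minimal among all cross angles of equivalent configurations if and only if
`A + max_i αᵢ ≤ π`. -/
theorem crossAngle_minimal_iff (k : ℕ) (θ : Fin (k + 2) → ℝ)
    (hmono : StrictMono θ) (hA : θ (Fin.last (k + 1)) - θ 0 < π) :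
    (∀ A' ∈ CrossAngles (fun i => vec2 (θ i)),
        θ (Fin.last (k + 1)) - θ 0 ≤ A') ↔
      θ (Fin.last (k + 1)) - θ 0 +
          (Finset.univ.sup' Finset.univ_nonempty
            fun i : Fin (k + 1) => θ i.succ - θ i.castSucc) ≤ π := by
  have hπ := Real.pi_pos
  constructor
  · intro hmin
    rw [add_comm, ← le_sub_iff_add_le]
    apply Finset.sup'_le
    intro j _
    have := hmin _ (flip_mem k θ hmono hA j)
    linarith
  · intro hsum A' hA'
    have hgap : ∀ j : Fin (k + 1),
        θ (Fin.last (k + 1)) - θ 0 + (θ j.succ - θ j.castSucc) ≤ π := by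
      intro j
      have hle := Finset.le_sup' (fun i : Fin (k + 1) => θ i.succ - θ i.castSucc)
        (Finset.mem_univ j)
      linarith
    obtain ⟨g, φ, ⟨U, σ, ε, hε, hg⟩, hφmono, hgvec, hA'eq, hA'π⟩ := hA'
    obtain ⟨β, hU | hU⟩ := isometry_vec2 U
    · have h : ∀ i, ∃ n : ℤ, φ i = θ (σ i) + β + n * π := by
        intro i
        have h1 : vec2 (φ i) = ε i • vec2 (θ (σ i) + β) := by
          rw [← hU, ← hgvec i, hg i]
        exact signed_eq (hε i) h1
      have := core (k + 1) θ φ hmono hφmono hA (by rw [← hA'eq]; exact hA'π) σ β h hgap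
      rw [hA'eq]
      exact this
    · set x : Fin (k + 2) → ℝ := fun i => -θ i.rev with hx
      have hxmono : StrictMono x := by
        intro i i' hlt
        simp only [hx]
        have : i'.rev < i.rev := Fin.rev_lt_rev.mpr hlt
        have := hmono this
        linarith
      have hrev0 : (0 : Fin (k + 2)).rev = Fin.last (k + 1) := by
        rw [← Fin.rev_last, Fin.rev_rev]
      have hxw : x (Fin.last (k + 1)) - x 0 = θ (Fin.last (k + 1)) - θ 0 := by
        simp only [hx, Fin.rev_last, hrev0]
        ring
      have hxgap : ∀ j : Fin (k + 1),
          x (Fin.last (k + 1)) - x 0 + (x j.succ - x j.castSucc) ≤ π := by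
        intro j
        have h1 : x j.succ - x j.castSucc = θ j.rev.succ - θ j.rev.castSucc := by
          simp only [hx, Fin.rev_succ, Fin.rev_castSucc]
          ring
        rw [hxw, h1]
        exact hgap j.rev
      have h : ∀ i, ∃ n : ℤ, φ i = x ((σ.trans Fin.revPerm) i) + β + n * π := by
        intro i
        have h1 : vec2 (φ i) = ε i • vec2 (β - θ (σ i)) := by
          rw [← hU, ← hgvec i, hg i]
        obtain ⟨n, hn⟩ := signed_eq (hε i) h1
        refine ⟨n, ?_⟩
        have hτ : x ((σ.trans Fin.revPerm) i) = -θ (σ i) := by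
          simp only [hx, Equiv.trans_apply, Fin.revPerm_apply, Fin.rev_rev]
        rw [hτ, hn]
        ring
      have := core (k + 1) x φ hxmono hφmono (by rw [hxw]; exact hA)
        (by rw [← hA'eq]; exact hA'π) (σ.trans Fin.revPerm) β h hxgap
      rw [hA'eq, ← hxw]
      exact this
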